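/- For every positive integer p and every natural number n with n ≥ p + 1, the cardinality of S^p_n satisfies |S^p_n| = |S^p_{n−1}| + |S^p_{n−(p+1)}|. -/
import Mathlib


/-- `S p n` is the collection of finite nonempty sets `F ⊆ ℕ` with
`min F ≥ p * |F|` and `max F = n`. -/
def S (p n : ℕ) : Set (Finset ℕ) :=
  {F | ∃ h : F.Nonempty, F.min' h ≥ p * F.card ∧ F.max' h = n}

lemma mem_S_iff {p n : ℕ} {F : Finset ℕ} :
    F ∈ S p n ↔ n ∈ F ∧ ∀ x ∈ F, x ≤ n ∧ p * F.card ≤ x := by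
  constructor
  · rintro ⟨h, hmin, hmax⟩
    exact ⟨hmax ▸ F.max'_mem h, fun x hx =>
      ⟨hmax ▸ F.le_max' x hx, le_trans hmin (F.min'_le x hx)⟩⟩
  · rintro ⟨hn, hb⟩
    have h : F.Nonempty := ⟨n, hn⟩
    exact ⟨h, (hb _ (F.min'_mem h)).2,
      le_antisymm (Finset.max'_le _ _ _ fun x hx => (hb x hx).1) (F.le_max' n hn)⟩

lemma S_finite (p n : ℕ) : (S p n).Finite := by
  apply Set.Finite.subset (Finset.range (n + 1)).powerset.finite_toSet
  intro F hF
  rw [mem_S_iff] at hF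
  simp only [Finset.coe_powerset, Set.mem_preimage, Set.mem_powerset_iff,
    Finset.coe_subset, Finset.subset_iff, Finset.mem_range] -- may need tweak
  intro x hx
  have := (hF.2 x hx).1
  omega

theorem stmt_1 (p : ℕ) (hp : 0 < p) (n : ℕ) (hn : n ≥ p + 1) :
    (S p n).ncard = (S p (n - 1)).ncard + (S p (n - (p + 1))).ncard := by
  classical
  set A : Set (Finset ℕ) := {F | F ∈ S p n ∧ (n - 1) ∉ F} with hA
  set B : Set (Finset ℕ) := {F | F ∈ S p n ∧ (n - 1) ∈ F} with hB
  have hfin := S_finite p n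
  have hAfin : A.Finite := hfin.subset (fun F hF => hF.1)
  have hBfin : B.Finite := hfin.subset (fun F hF => hF.1)
  have hunion : S p n = A ∪ B := by
    ext F
    simp only [hA, hB, Set.mem_union, Set.mem_setOf_eq]
    tauto
  have hdisj : Disjoint A B := by
    rw [Set.disjoint_iff_inter_eq_empty]
    ext F
    simp only [hA, hB, Set.mem_inter_iff, Set.mem_setOf_eq, Set.mem_empty_iff_false,
      iff_false]
    tauto
  -- first bijection : A ≃ S p (n-1) via F ↦ insert (n-1) (F.erase n)
  set f1 : Finset ℕ → Finset ℕ := fun F => insert (n - 1) (F.erase n) with hf1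
  have hf1inv : ∀ F ∈ A, insert n ((f1 F).erase (n - 1)) = F := by
    rintro F ⟨hFS, hFn1⟩
    rw [mem_S_iff] at hFS
    have hne : n - 1 ∉ F.erase n := fun h => hFn1 (Finset.mem_of_mem_erase h)
    rw [hf1]
    simp only
    rw [Finset.erase_insert hne, Finset.insert_erase hFS.1]
  have hf1inj : Set.InjOn f1 A := by
    intro F hF G hG hFG
    rw [← hf1inv F hF, ← hf1inv G hG, hFG]
  have hf1img : f1 '' A = S p (n - 1) := by
    ext G
    constructor
    · rintro ⟨F, ⟨hFS, hFn1⟩, rfl⟩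
      rw [mem_S_iff] at hFS
      obtain ⟨hnF, hbd⟩ := hFS
      have hne : n - 1 ∉ F.erase n := fun h => hFn1 (Finset.mem_of_mem_erase h)
      have hcard : (f1 F).card = F.card := by
        rw [hf1]
        simp only
        rw [Finset.card_insert_of_notMem hne, Finset.card_erase_of_mem hnF]
        have : 1 ≤ F.card := Finset.card_pos.mpr ⟨n, hnF⟩
        omega
      have hkey : p * F.card ≤ n - 1 := by
        by_cases hone : F.card = 1
        · have h2 := (hbd n hnF).2
          rw [hone, mul_one] at h2 ⊢
          omega
        · have h1 : 1 < F.card := by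
            have := Finset.card_pos.mpr ⟨n, hnF⟩
            omega
          obtain ⟨y, hy, hyne⟩ := Finset.exists_mem_ne h1 n
          obtain ⟨ha, hb⟩ := hbd y hy
          exact le_trans hb (by omega)
      rw [mem_S_iff]
      constructor
      · exact Finset.mem_insert_self _ _
      · intro x hx
        rw [hf1] at hx
        simp only [Finset.mem_insert, Finset.mem_erase] at hx
        rcases hx with rfl | ⟨hxn, hxF⟩
        · exact ⟨le_refl _, hcard ▸ hkey⟩
        · obtain ⟨ha, hb⟩ := hbd x hxF
          rw [hcard]
          exact ⟨by omega, hb⟩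
    · intro hG
      rw [mem_S_iff] at hG
      obtain ⟨hn1G, hbd⟩ := hG
      refine ⟨insert n (G.erase (n - 1)), ?_, ?_⟩
      · have hnG : n ∉ G.erase (n - 1) := by
          intro h
          have := (hbd n (Finset.mem_of_mem_erase h)).1
          omega
        have hcard : (insert n (G.erase (n - 1))).card = G.card := by
          rw [Finset.card_insert_of_notMem hnG, Finset.card_erase_of_mem hn1G]
          have : 1 ≤ G.card := Finset.card_pos.mpr ⟨n - 1, hn1G⟩
          omega
        constructor
        · rw [mem_S_iff]
          refine ⟨Finset.mem_insert_self _ _, ?_⟩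
          intro x hx
          simp only [Finset.mem_insert, Finset.mem_erase] at hx
          rw [hcard]
          rcases hx with hx0 | ⟨hxn1, hxG⟩
          · rw [hx0]
            have hb := (hbd (n - 1) hn1G).2
            exact ⟨le_refl _, le_trans hb (by omega)⟩
          · obtain ⟨ha, hb⟩ := hbd x hxG
            exact ⟨by omega, hb⟩
        · simp only [Finset.mem_insert, Finset.mem_erase]
          push_neg
          exact ⟨by omega, fun h => absurd rfl h⟩
      · have hnG : n ∉ G.erase (n - 1) := by
          intro h
          have := (hbd n (Finset.mem_of_mem_erase h)).1
          omega
        rw [hf1]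
        simp only
        rw [Finset.erase_insert hnG, Finset.insert_erase hn1G]
  -- second bijection : B ≃ S p (n - (p+1)) via F ↦ (F.erase n).image (· - p)
  set f2 : Finset ℕ → Finset ℕ := fun F => (F.erase n).image (· - p) with hf2
  have hBmem : ∀ F ∈ B, n ∈ F ∧ n - 1 ∈ F ∧ 2 ≤ F.card ∧
      (∀ x ∈ F, x ≤ n ∧ p * F.card ≤ x) ∧ (∀ x ∈ F, p ≤ x) := by
    rintro F ⟨hFS, hFn1⟩
    rw [mem_S_iff] at hFS
    obtain ⟨hnF, hbd⟩ := hFS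
    have hcard2 : 2 ≤ F.card := by
      have := Finset.one_lt_card.mpr ⟨n, hnF, n - 1, hFn1, by omega⟩
      omega
    refine ⟨hnF, hFn1, hcard2, hbd, fun x hx => ?_⟩
    have := (hbd x hx).2
    nlinarith
  have hf2inv : ∀ F ∈ B, insert n ((f2 F).image (· + p)) = F := by
    intro F hF
    obtain ⟨hnF, hFn1, hcard2, hbd, hge⟩ := hBmem F hF
    rw [hf2]
    simp only
    rw [Finset.image_image]
    have : (F.erase n).image ((· + p) ∘ (· - p)) = F.erase n := by
      apply Finset.image_congr (g := id) ?_ |>.trans (Finset.image_id)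
      intro x hx
      have := hge x (Finset.mem_of_mem_erase hx)
      simp only [Function.comp_apply, id_eq]
      omega
    rw [this, Finset.insert_erase hnF]
  have hf2inj : Set.InjOn f2 B := by
    intro F hF G hG hFG
    rw [← hf2inv F hF, ← hf2inv G hG, hFG]
  have hf2img : f2 '' B = S p (n - (p + 1)) := by
    ext G
    constructor
    · rintro ⟨F, hF, rfl⟩
      obtain ⟨hnF, hFn1, hcard2, hbd, hge⟩ := hBmem F hF
      have hcard : (f2 F).card = F.card - 1 := by
        rw [hf2]
        simp only
        rw [Finset.card_image_of_injOn, Finset.card_erase_of_mem hnF]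
        intro x hx y hy hxy
        have hx' := hge x (Finset.mem_of_mem_erase hx)
        have hy' := hge y (Finset.mem_of_mem_erase hy)
        simp only at hxy
        omega
      rw [mem_S_iff]
      constructor
      · rw [hf2]
        simp only [Finset.mem_image, Finset.mem_erase]
        exact ⟨n - 1, ⟨by omega, hFn1⟩, by omega⟩
      · intro y hy
        rw [hf2] at hy
        simp only [Finset.mem_image, Finset.mem_erase] at hy
        obtain ⟨x, ⟨hxn, hxF⟩, rfl⟩ := hy
        have hx1 := (hbd x hxF).1
        have hx2 := (hbd x hxF).2
        rw [hcard]
        obtain ⟨c, hc⟩ : ∃ c, F.card = c + 1 := ⟨F.card - 1, by omega⟩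
        rw [hc] at hx2 ⊢
        rw [Nat.mul_add, Nat.mul_one] at hx2
        simp only [Nat.add_sub_cancel]
        set m := p * c with hm
        omega
    · intro hG
      rw [mem_S_iff] at hG
      obtain ⟨hmG, hbd⟩ := hG
      refine ⟨insert n (G.image (· + p)), ?_, ?_⟩
      · have hnG : n ∉ G.image (· + p) := by
          simp only [Finset.mem_image]
          rintro ⟨y, hy, rfl⟩
          have := (hbd y hy).1
          omega
        have hcard : (insert n (G.image (· + p))).card = G.card + 1 := by
          rw [Finset.card_insert_of_notMem hnG,
            Finset.card_image_of_injective _ (add_left_injective p)]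
        constructor
        · rw [mem_S_iff]
          refine ⟨Finset.mem_insert_self _ _, ?_⟩
          intro x hx
          rw [hcard]
          have hmb := (hbd (n - (p + 1)) hmG).2
          simp only [Finset.mem_insert, Finset.mem_image] at hx
          rw [Nat.mul_add, Nat.mul_one]
          set m := p * G.card with hm
          rcases hx with hx0 | ⟨y, hy, rfl⟩
          · rw [hx0]
            exact ⟨le_refl _, by omega⟩
          · have h1 := (hbd y hy).1
            have h2 := (hbd y hy).2
            rw [hm] at hmb ⊢
            omega
        · simp only [Finset.mem_insert, Finset.mem_image]
          right
          refine ⟨n - (p + 1), hmG, by omega⟩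
      · have hnG : n ∉ G.image (· + p) := by
          simp only [Finset.mem_image]
          rintro ⟨y, hy, rfl⟩
          have := (hbd y hy).1
          omega
        rw [hf2]
        simp only
        rw [Finset.erase_insert hnG, Finset.image_image]
        apply Finset.image_congr (g := id) ?_ |>.trans (Finset.image_id)
        intro x hx
        simp only [Function.comp_apply, id_eq]
        omega
  have h1 : A.ncard = (S p (n - 1)).ncard := by
    rw [← hf1img, Set.ncard_image_of_injOn hf1inj]
  have h2 : B.ncard = (S p (n - (p + 1))).ncard := by
    rw [← hf2img, Set.ncard_image_of_injOn hf2inj]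
  rw [hunion, Set.ncard_union_eq hdisj hAfin hBfin, h1, h2]
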